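/- (Conservation law for W_β, homogeneous case.) Let β : ℝ³ → ℝ be a C² function with Δ_{H¹}β = 0, and let u be a C² solution of Δ_{H¹}u = 0 on an open set Ω ⊆ ℝ³. Define on Ω: W₁ = β(u_x + 2y·u_t) − u(β_x + 2y·β_t), W₂ = β(u_y − 2x·u_t) − u(β_y − 2x·β_t), W₃ = β[−2x·u_y + 2y·u_x + 4(x²+y²)u_t] + 2u[x·β_y − y·β_x − 2(x²+y²)β_t]. Then ∂W₁/∂x + ∂W₂/∂y + ∂W₃/∂t = 0 at every point of Ω. -/

import Mathlib

/-- Partial derivative with respect to the first coordinate (x). -/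
noncomputable def pdx (u : ℝ × ℝ × ℝ → ℝ) : ℝ × ℝ × ℝ → ℝ :=
  fun p => fderiv ℝ u p (1, 0, 0)

/-- Partial derivative with respect to the second coordinate (y). -/
noncomputable def pdy (u : ℝ × ℝ × ℝ → ℝ) : ℝ × ℝ × ℝ → ℝ :=
  fun p => fderiv ℝ u p (0, 1, 0)

/-- Partial derivative with respect to the third coordinate (t). -/
noncomputable def pdt (u : ℝ × ℝ × ℝ → ℝ) : ℝ × ℝ × ℝ → ℝ :=
  fun p => fderiv ℝ u p (0, 0, 1)

/-- The Kohn–Laplace operator on the Heisenberg group H¹: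
`Δ u = u_xx + u_yy + 4(x²+y²) u_tt + 4y u_xt − 4x u_yt`. -/
noncomputable def KohnLaplace (u : ℝ × ℝ × ℝ → ℝ) : ℝ × ℝ × ℝ → ℝ :=
  fun p => pdx (pdx u) p + pdy (pdy u) p
    + 4 * (p.1 ^ 2 + p.2.1 ^ 2) * pdt (pdt u) p
    + 4 * p.2.1 * pdt (pdx u) p - 4 * p.1 * pdt (pdy u) p

variable {p : ℝ × ℝ × ℝ}

private lemma diffAt_pd (v : ℝ × ℝ × ℝ) {f : ℝ × ℝ × ℝ → ℝ} (hf : ContDiffAt ℝ 2 f p) :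
    DifferentiableAt ℝ (fun q => fderiv ℝ f q v) p :=
  ((hf.fderiv_right (m := 1) (by norm_num)).differentiableAt one_ne_zero).clm_apply
    (differentiableAt_const v)

private lemma pd_pd (v w : ℝ × ℝ × ℝ) {f : ℝ × ℝ × ℝ → ℝ} (hf : ContDiffAt ℝ 2 f p) :
    fderiv ℝ (fun q => fderiv ℝ f q w) p v = fderiv ℝ (fderiv ℝ f) p v w := by
  rw [show (fun q => fderiv ℝ f q w) = (fun q => (fderiv ℝ f q) ((fun _ => w) q)) from rfl,
    fderiv_clm_apply ((hf.fderiv_right (m := 1) (by norm_num)).differentiableAt one_ne_zero)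
      (differentiableAt_const w)]
  simp

private lemma pd_swap (v w : ℝ × ℝ × ℝ) {f : ℝ × ℝ × ℝ → ℝ} (hf : ContDiffAt ℝ 2 f p) :
    fderiv ℝ (fun q => fderiv ℝ f q w) p v = fderiv ℝ (fun q => fderiv ℝ f q v) p w := by
  rw [pd_pd v w hf, pd_pd w v hf, hf.isSymmSndFDerivAt (by simp) v w]

private lemma pd_mul (v : ℝ × ℝ × ℝ) {f g : ℝ × ℝ × ℝ → ℝ} (hf : DifferentiableAt ℝ f p)
    (hg : DifferentiableAt ℝ g p) :
    fderiv ℝ (fun q => f q * g q) p v = f p * fderiv ℝ g p v + g p * fderiv ℝ f p v := by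
  rw [fderiv_fun_mul hf hg]; simp

private lemma pd_add (v : ℝ × ℝ × ℝ) {f g : ℝ × ℝ × ℝ → ℝ} (hf : DifferentiableAt ℝ f p)
    (hg : DifferentiableAt ℝ g p) :
    fderiv ℝ (fun q => f q + g q) p v = fderiv ℝ f p v + fderiv ℝ g p v := by
  rw [fderiv_fun_add hf hg]; simp

private lemma pd_sub (v : ℝ × ℝ × ℝ) {f g : ℝ × ℝ × ℝ → ℝ} (hf : DifferentiableAt ℝ f p)
    (hg : DifferentiableAt ℝ g p) :
    fderiv ℝ (fun q => f q - g q) p v = fderiv ℝ f p v - fderiv ℝ g p v := by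
  rw [fderiv_fun_sub hf hg]; simp

private lemma pd_x (v : ℝ × ℝ × ℝ) : fderiv ℝ (fun q : ℝ × ℝ × ℝ => q.1) p v = v.1 := by
  rw [show (fun q : ℝ × ℝ × ℝ => q.1)
      = (ContinuousLinearMap.fst ℝ ℝ (ℝ × ℝ) : ℝ × ℝ × ℝ →L[ℝ] ℝ) from rfl,
    ContinuousLinearMap.fderiv]
  rfl

private lemma pd_y (v : ℝ × ℝ × ℝ) : fderiv ℝ (fun q : ℝ × ℝ × ℝ => q.2.1) p v = v.2.1 := by
  rw [show (fun q : ℝ × ℝ × ℝ => q.2.1)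
      = ((ContinuousLinearMap.fst ℝ ℝ ℝ).comp (ContinuousLinearMap.snd ℝ ℝ (ℝ × ℝ)) :
        ℝ × ℝ × ℝ →L[ℝ] ℝ) from rfl,
    ContinuousLinearMap.fderiv]
  rfl

private lemma pd_cy (v : ℝ × ℝ × ℝ) :
    fderiv ℝ (fun q : ℝ × ℝ × ℝ => 2 * q.2.1) p v = 2 * v.2.1 := by
  rw [pd_mul v (differentiableAt_const 2) differentiableAt_snd.fst, pd_y]
  simp

private lemma pd_cx2 (v : ℝ × ℝ × ℝ) :
    fderiv ℝ (fun q : ℝ × ℝ × ℝ => 2 * q.1) p v = 2 * v.1 := by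
  rw [pd_mul v (differentiableAt_const 2) differentiableAt_fst, pd_x]
  simp

private lemma pd_cx (v : ℝ × ℝ × ℝ) :
    fderiv ℝ (fun q : ℝ × ℝ × ℝ => -2 * q.1) p v = -2 * v.1 := by
  rw [pd_mul v (differentiableAt_const (-2)) differentiableAt_fst, pd_x]
  simp

private lemma pd_r (v : ℝ × ℝ × ℝ) :
    fderiv ℝ (fun q : ℝ × ℝ × ℝ => 4 * (q.1 ^ 2 + q.2.1 ^ 2)) p v
      = 8 * p.1 * v.1 + 8 * p.2.1 * v.2.1 := by
  have hx : DifferentiableAt ℝ (fun q : ℝ × ℝ × ℝ => q.1) p := differentiableAt_fst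
  have hy : DifferentiableAt ℝ (fun q : ℝ × ℝ × ℝ => q.2.1) p := differentiableAt_snd.fst
  rw [show (fun q : ℝ × ℝ × ℝ => 4 * (q.1 ^ 2 + q.2.1 ^ 2))
      = fun q : ℝ × ℝ × ℝ => (4 : ℝ) * (q.1 * q.1 + q.2.1 * q.2.1) from
        funext fun q => by ring,
    pd_mul v (differentiableAt_const 4) ((hx.fun_mul hx).fun_add (hy.fun_mul hy)),
    pd_add v (hx.fun_mul hx) (hy.fun_mul hy), pd_mul v hx hx, pd_mul v hy hy, pd_x, pd_y]
  simp; ring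

private lemma div_current {f g : ℝ × ℝ × ℝ → ℝ}
    (hf : ContDiffAt ℝ 2 f p) (hg : ContDiffAt ℝ 2 g p) :
    pdx (fun q => f q * (pdx g q + 2 * q.2.1 * pdt g q)) p
    + pdy (fun q => f q * (pdy g q - 2 * q.1 * pdt g q)) p
    + pdt (fun q => f q * (-2 * q.1 * pdy g q + 2 * q.2.1 * pdx g q
        + 4 * (q.1 ^ 2 + q.2.1 ^ 2) * pdt g q)) p
    = f p * KohnLaplace g p
      + pdx f p * pdx g p + pdy f p * pdy g p
      + 4 * (p.1 ^ 2 + p.2.1 ^ 2) * pdt f p * pdt g p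
      + 2 * p.2.1 * (pdx f p * pdt g p + pdt f p * pdx g p)
      - 2 * p.1 * (pdy f p * pdt g p + pdt f p * pdy g p) := by
  have hf' : DifferentiableAt ℝ f p := hf.differentiableAt (by norm_num)
  have hgx := diffAt_pd (1, 0, 0) hg
  have hgy := diffAt_pd (0, 1, 0) hg
  have hgt := diffAt_pd (0, 0, 1) hg
  have hcy : DifferentiableAt ℝ (fun q : ℝ × ℝ × ℝ => 2 * q.2.1) p :=
    differentiableAt_snd.fst.const_mul 2
  have hcx2 : DifferentiableAt ℝ (fun q : ℝ × ℝ × ℝ => 2 * q.1) p :=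
    differentiableAt_fst.const_mul 2
  have hcx : DifferentiableAt ℝ (fun q : ℝ × ℝ × ℝ => -2 * q.1) p :=
    differentiableAt_fst.const_mul (-2)
  have hr : DifferentiableAt ℝ (fun q : ℝ × ℝ × ℝ => 4 * (q.1 ^ 2 + q.2.1 ^ 2)) p :=
    ((differentiableAt_fst.pow 2).add (differentiableAt_snd.fst.pow 2)).const_mul 4
  simp only [pdx, pdy, pdt, KohnLaplace,
    show pdx g = fun q => fderiv ℝ g q (1, 0, 0) from rfl,
    show pdy g = fun q => fderiv ℝ g q (0, 1, 0) from rfl,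
    show pdt g = fun q => fderiv ℝ g q (0, 0, 1) from rfl]
  rw [pd_mul (1, 0, 0) hf' (hgx.fun_add (hcy.fun_mul hgt)),
    pd_add (1, 0, 0) hgx (hcy.fun_mul hgt),
    pd_mul (1, 0, 0) hcy hgt,
    pd_mul (0, 1, 0) hf' (hgy.fun_sub (hcx2.fun_mul hgt)),
    pd_sub (0, 1, 0) hgy (hcx2.fun_mul hgt),
    pd_mul (0, 1, 0) hcx2 hgt,
    pd_mul (0, 0, 1) hf' (((hcx.fun_mul hgy).fun_add (hcy.fun_mul hgx)).fun_add (hr.fun_mul hgt)),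
    pd_add (0, 0, 1) ((hcx.fun_mul hgy).fun_add (hcy.fun_mul hgx)) (hr.fun_mul hgt),
    pd_add (0, 0, 1) (hcx.fun_mul hgy) (hcy.fun_mul hgx),
    pd_mul (0, 0, 1) hcx hgy,
    pd_mul (0, 0, 1) hcy hgx,
    pd_mul (0, 0, 1) hr hgt,
    pd_swap (1, 0, 0) (0, 0, 1) hg,
    pd_swap (0, 1, 0) (0, 0, 1) hg]
  simp only [pd_cy, pd_cx2, pd_cx, pd_r]
  norm_num
  ring

/-- conservation law for the Noether symmetry W_β of the
homogeneous Kohn–Laplace equation: if Δ_{H¹}β = 0 and u is a C² solution of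
Δ_{H¹}u = 0 on an open set Ω, then Div(W) = 0 on Ω, where
W₁ = β(u_x + 2y u_t) − u(β_x + 2y β_t),
W₂ = β(u_y − 2x u_t) − u(β_y − 2x β_t),
W₃ = β(−2x u_y + 2y u_x + 4(x²+y²)u_t) + 2u(x β_y − y β_x − 2(x²+y²)β_t). -/
theorem conservation_law_Wbeta_homogeneous
    (β : ℝ × ℝ × ℝ → ℝ) (hβ : ContDiff ℝ 2 β)
    (hβeq : ∀ p : ℝ × ℝ × ℝ, KohnLaplace β p = 0)
    (Ω : Set (ℝ × ℝ × ℝ)) (hΩ : IsOpen Ω)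
    (u : ℝ × ℝ × ℝ → ℝ) (hu : ContDiffOn ℝ 2 u Ω)
    (hsol : ∀ p ∈ Ω, KohnLaplace u p = 0) :
    ∀ p ∈ Ω,
      pdx (fun q =>
        β q * (pdx u q + 2 * q.2.1 * pdt u q)
          - u q * (pdx β q + 2 * q.2.1 * pdt β q)) p
      + pdy (fun q =>
        β q * (pdy u q - 2 * q.1 * pdt u q)
          - u q * (pdy β q - 2 * q.1 * pdt β q)) p
      + pdt (fun q =>
        β q * (-2 * q.1 * pdy u q + 2 * q.2.1 * pdx u q
            + 4 * (q.1 ^ 2 + q.2.1 ^ 2) * pdt u q)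
          + 2 * u q * (q.1 * pdy β q - q.2.1 * pdx β q
            - 2 * (q.1 ^ 2 + q.2.1 ^ 2) * pdt β q)) p = 0 := by
  intro p hp
  have hup : ContDiffAt ℝ 2 u p := hu.contDiffAt (hΩ.mem_nhds hp)
  have hβp : ContDiffAt ℝ 2 β p := hβ.contDiffAt
  have hβ' : DifferentiableAt ℝ β p := hβp.differentiableAt (by norm_num)
  have hu' : DifferentiableAt ℝ u p := hup.differentiableAt (by norm_num)
  have hux := diffAt_pd (1, 0, 0) hup
  have huy := diffAt_pd (0, 1, 0) hup
  have hut := diffAt_pd (0, 0, 1) hup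
  have hβx := diffAt_pd (1, 0, 0) hβp
  have hβy := diffAt_pd (0, 1, 0) hβp
  have hβt := diffAt_pd (0, 0, 1) hβp
  have hcy : DifferentiableAt ℝ (fun q : ℝ × ℝ × ℝ => 2 * q.2.1) p :=
    differentiableAt_snd.fst.const_mul 2
  have hcx2 : DifferentiableAt ℝ (fun q : ℝ × ℝ × ℝ => 2 * q.1) p :=
    differentiableAt_fst.const_mul 2
  have hcx : DifferentiableAt ℝ (fun q : ℝ × ℝ × ℝ => -2 * q.1) p :=
    differentiableAt_fst.const_mul (-2)
  have hr : DifferentiableAt ℝ (fun q : ℝ × ℝ × ℝ => 4 * (q.1 ^ 2 + q.2.1 ^ 2)) p :=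
    ((differentiableAt_fst.pow 2).add (differentiableAt_snd.fst.pow 2)).const_mul 4
  have A := div_current hβp hup
  have B := div_current hup hβp
  have hKu : KohnLaplace u p = 0 := hsol p hp
  have hKβ : KohnLaplace β p = 0 := hβeq p
  simp only [pdx, pdy, pdt, KohnLaplace,
    show pdx u = fun q => fderiv ℝ u q (1, 0, 0) from rfl,
    show pdy u = fun q => fderiv ℝ u q (0, 1, 0) from rfl,
    show pdt u = fun q => fderiv ℝ u q (0, 0, 1) from rfl,
    show pdx β = fun q => fderiv ℝ β q (1, 0, 0) from rfl,
    show pdy β = fun q => fderiv ℝ β q (0, 1, 0) from rfl,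
    show pdt β = fun q => fderiv ℝ β q (0, 0, 1) from rfl] at A B hKu hKβ ⊢
  rw [pd_sub (1, 0, 0) (hβ'.fun_mul (hux.fun_add (hcy.fun_mul hut))) (hu'.fun_mul (hβx.fun_add (hcy.fun_mul hβt))),
    pd_sub (0, 1, 0) (hβ'.fun_mul (huy.fun_sub (hcx2.fun_mul hut))) (hu'.fun_mul (hβy.fun_sub (hcx2.fun_mul hβt))),
    show (fun q => β q * (-2 * q.1 * fderiv ℝ u q (0, 1, 0)
          + 2 * q.2.1 * fderiv ℝ u q (1, 0, 0)
          + 4 * (q.1 ^ 2 + q.2.1 ^ 2) * fderiv ℝ u q (0, 0, 1))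
        + 2 * u q * (q.1 * fderiv ℝ β q (0, 1, 0) - q.2.1 * fderiv ℝ β q (1, 0, 0)
          - 2 * (q.1 ^ 2 + q.2.1 ^ 2) * fderiv ℝ β q (0, 0, 1)))
      = (fun q => β q * (-2 * q.1 * fderiv ℝ u q (0, 1, 0)
          + 2 * q.2.1 * fderiv ℝ u q (1, 0, 0)
          + 4 * (q.1 ^ 2 + q.2.1 ^ 2) * fderiv ℝ u q (0, 0, 1))
        - u q * (-2 * q.1 * fderiv ℝ β q (0, 1, 0)
          + 2 * q.2.1 * fderiv ℝ β q (1, 0, 0)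
          + 4 * (q.1 ^ 2 + q.2.1 ^ 2) * fderiv ℝ β q (0, 0, 1))) from
      funext fun q => by ring,
    pd_sub (0, 0, 1) (hβ'.fun_mul (((hcx.fun_mul huy).fun_add (hcy.fun_mul hux)).fun_add (hr.fun_mul hut)))
      (hu'.fun_mul (((hcx.fun_mul hβy).fun_add (hcy.fun_mul hβx)).fun_add (hr.fun_mul hβt)))]
  linear_combination A - B + β p * hKu - u p * hKβ
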